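/- Let L be a complete residuated lattice and Y a nonempty set. For L-sets A,B,M : Y → L let S(A,M) = ⨅_{y∈Y} (A(y) → M(y)), let ||A ⇒ B||_M = S(A,M) → S(B,M), and let A ⊔ B be the pointwise join. Let T be a map assigning to each pair (A,B) of L-sets a degree T(A ⇒ B) ∈ L, let Mod(T) = {M : Y → L | T(A ⇒ B) ≤ ||A ⇒ B||_M for all A,B}, and let ||A ⇒ B||_T = ⨅_{M ∈ Mod(T)} ||A ⇒ B||_M. Then for all A,B,C,D : Y → L, ||A ⇒ B||_T ⊗ ||C ⇒ D||_T ≤ ||A ⊔ C ⇒ B ⊔ D||_T. -/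
import Mathlib


/-- A complete (integral commutative) residuated lattice: a complete lattice
with a commutative monoid operation `otimes` whose unit is the top element,
together with a residuum `rimp` satisfying the adjointness property. -/
class CompleteResiduatedLattice (L : Type*) extends CompleteLattice L where
  otimes : L → L → L
  rimp : L → L → L
  otimes_comm : ∀ a b : L, otimes a b = otimes b a
  otimes_assoc : ∀ a b c : L, otimes (otimes a b) c = otimes a (otimes b c)
  otimes_top : ∀ a : L, otimes a ⊤ = a
  adjoint : ∀ a b c : L, otimes a b ≤ c ↔ a ≤ rimp b c

open CompleteResiduatedLattice

local infixr:70 " ⊛ " => CompleteResiduatedLattice.otimes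

variable {L : Type*} [CompleteResiduatedLattice L] {Y : Type*}

/-- The degree `S(A,M)` to which the L-set `A` is included in the L-set `M`. -/
def Ssub (A M : Y → L) : L := ⨅ y, rimp (A y) (M y)

/-- The degree `||A ⇒ B||_M` to which the fuzzy attribute implication
`A ⇒ B` is true in the L-set `M`. -/
def faiDeg (A B M : Y → L) : L := rimp (Ssub A M) (Ssub B M)

/-- The set `Mod(T)` of all models of an L-set `T` of fuzzy attribute
implications. -/
def faiMod (T : (Y → L) → (Y → L) → L) : Set (Y → L) :=
  {M | ∀ A B, T A B ≤ faiDeg A B M}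

/-- The degree `||A ⇒ B||_T` to which `A ⇒ B` is semantically entailed
by `T`. -/
def faiDegT (T : (Y → L) → (Y → L) → L) (A B : Y → L) : L :=
  ⨅ M ∈ faiMod T, faiDeg A B M

lemma otimes_mono {a b c d : L} (h1 : a ≤ b) (h2 : c ≤ d) : a ⊛ c ≤ b ⊛ d := by
  calc a ⊛ c ≤ b ⊛ c := (adjoint a c (b ⊛ c)).mpr (le_trans h1 ((adjoint b c (b ⊛ c)).mp le_rfl))
    _ = c ⊛ b := otimes_comm b c
    _ ≤ d ⊛ b := (adjoint c b (d ⊛ b)).mpr (le_trans h2 ((adjoint d b (d ⊛ b)).mp le_rfl))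
    _ = b ⊛ d := otimes_comm d b

lemma rimp_otimes_le (a b : L) : rimp a b ⊛ a ≤ b := (adjoint _ _ _).mpr le_rfl

lemma rimp_sup (a b c : L) : rimp (a ⊔ b) c = rimp a c ⊓ rimp b c := by
  apply eq_of_forall_le_iff
  intro x
  rw [le_inf_iff, ← adjoint, ← adjoint, ← adjoint, otimes_comm x (a ⊔ b),
    otimes_comm x a, otimes_comm x b, adjoint, adjoint, adjoint, sup_le_iff]

lemma rimp_inf_key (p q r s : L) : rimp p q ⊛ rimp r s ≤ rimp (p ⊓ r) (q ⊓ s) := by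
  rw [← adjoint]
  apply le_inf
  · calc (rimp p q ⊛ rimp r s) ⊛ (p ⊓ r) ≤ (rimp p q ⊛ ⊤) ⊛ p :=
        otimes_mono (otimes_mono le_rfl le_top) inf_le_left
      _ = rimp p q ⊛ p := by rw [otimes_top]
      _ ≤ q := rimp_otimes_le p q
  · calc (rimp p q ⊛ rimp r s) ⊛ (p ⊓ r) ≤ (⊤ ⊛ rimp r s) ⊛ r :=
        otimes_mono (otimes_mono le_top le_rfl) inf_le_right
      _ = rimp r s ⊛ r := by rw [otimes_comm ⊤, otimes_top]
      _ ≤ s := rimp_otimes_le r s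

lemma Ssub_sup (A C M : Y → L) :
    Ssub (fun y => A y ⊔ C y) M = Ssub A M ⊓ Ssub C M := by
  unfold Ssub
  simp only [rimp_sup]
  exact iInf_inf_eq

/-- Semantic entailment of fuzzy attribute implications is compatible with
pointwise joins: `||A ⇒ B||_T ⊗ ||C ⇒ D||_T ≤ ||A ⊔ C ⇒ B ⊔ D||_T`. -/
theorem stmt4 {L : Type*} [CompleteResiduatedLattice L] {Y : Type*} [Nonempty Y]
    (T : (Y → L) → (Y → L) → L) (A B C D : Y → L) :
    faiDegT T A B ⊛ faiDegT T C D ≤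
      faiDegT T (fun y => A y ⊔ C y) (fun y => B y ⊔ D y) := by
  apply le_iInf₂
  intro M hM
  calc faiDegT T A B ⊛ faiDegT T C D ≤ faiDeg A B M ⊛ faiDeg C D M :=
      otimes_mono (biInf_le _ hM) (biInf_le _ hM)
    _ ≤ faiDeg (fun y => A y ⊔ C y) (fun y => B y ⊔ D y) M := by
      unfold faiDeg
      rw [Ssub_sup, Ssub_sup]
      exact rimp_inf_key _ _ _ _
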